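/- arXiv:1603.04486 — 2 statements merged into one kernel-verified Lean document; each statement's English description precedes it below -/
import Mathlib

section
/- Let m → ∞. Then J_m(·, η1, η2) converges to J_b(·, η1, η2) uniformly on ℝ; that is, for every ε > 0 there exists M ∈ ℕ such that for all m ≥ M and all x ∈ ℝ, |J_m(x, η1, η2) − J_b(x, η1, η2)| < ε. -/
open MeasureTheory Filter

lemma periodic_unifcont {W : ℝ → ℝ} {c : ℝ} (hc : 0 < c) (hW : Continuous W)
    (hper : Function.Periodic W c) :
    ∀ ε > 0, ∃ δ > 0, ∀ a b : ℝ, |a - b| < δ → |W a - W b| < ε := by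
  intro ε hε
  have hcomp : IsCompact (Set.Icc (-c) (2 * c)) := isCompact_Icc
  have huc : UniformContinuousOn W (Set.Icc (-c) (2 * c)) :=
    hcomp.uniformContinuousOn_of_continuous hW.continuousOn
  rw [Metric.uniformContinuousOn_iff] at huc
  obtain ⟨δ, hδ, hbd⟩ := huc ε hε
  refine ⟨min δ c, lt_min hδ hc, fun a b hab => ?_⟩
  set n : ℤ := ⌊a / c⌋
  set a' := a - n * c with ha'
  set b' := b - n * c with hb'
  have ha0 : 0 ≤ a' := Int.sub_floor_div_mul_nonneg a hc
  have ha1 : a' < c := Int.sub_floor_div_mul_lt a hc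
  have hab' : |a' - b'| < min δ c := by
    have : a' - b' = a - b := by ring
    rwa [this]
  have hamem : a' ∈ Set.Icc (-c) (2 * c) := by
    constructor <;> nlinarith
  have hbmem : b' ∈ Set.Icc (-c) (2 * c) := by
    have h1 : |a' - b'| < c := lt_of_lt_of_le hab' (min_le_right _ _)
    rw [abs_lt] at h1
    constructor <;> nlinarith [h1.1, h1.2]
  have hfa : W a' = W a := hper.sub_int_mul_eq n
  have hfb : W b' = W b := hper.sub_int_mul_eq n
  have := hbd a' hamem b' hbmem (by
    rw [Real.dist_eq]; exact lt_of_lt_of_le hab' (min_le_left _ _))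
  rw [Real.dist_eq] at this
  rwa [hfa, hfb] at this

lemma shift_bound {W : ℝ → ℝ} (hW : Continuous W) (x a b t ε' : ℝ) (hab : a ≤ b)
    (hbd : ∀ u v : ℝ, |u - v| ≤ |t| → |W u - W v| ≤ ε') :
    |(∫ y in (a + t)..(b + t), W (x - y)) - ∫ y in a..b, W (x - y)| ≤ ε' * (b - a) := by
  have h1 : (∫ y in (a + t)..(b + t), W (x - y)) = ∫ y in a..b, W (x - (y + t)) :=
    (intervalIntegral.integral_comp_add_right (fun y => W (x - y)) t).symm
  rw [h1]
  have hi1 : IntervalIntegrable (fun y => W (x - (y + t))) volume a b :=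
    (hW.comp (by continuity)).intervalIntegrable a b
  have hi2 : IntervalIntegrable (fun y => W (x - y)) volume a b :=
    (hW.comp (by continuity)).intervalIntegrable a b
  rw [← intervalIntegral.integral_sub hi1 hi2]
  have := intervalIntegral.norm_integral_le_of_norm_le_const
    (a := a) (b := b) (C := ε') (f := fun y => W (x - (y + t)) - W (x - y))
    (fun y _ => by
      have : |(x - (y + t)) - (x - y)| ≤ |t| := by
        have h : (x - (y + t)) - (x - y) = -t := by ring
        rw [h, abs_neg]
      exact hbd _ _ this)
  rw [Real.norm_eq_abs] at this
  calc _ ≤ ε' * |b - a| := this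
    _ = ε' * (b - a) := by rw [abs_of_nonneg (by linarith)]

lemma sum_range_three_mul (f : ℕ → ℝ) (m : ℕ) :
    ∑ i ∈ Finset.range (3 * m), f i
      = ∑ j ∈ Finset.range m, (f (3 * j) + f (3 * j + 1) + f (3 * j + 2)) := by
  induction m with
  | zero => simp
  | succ n ih =>
    rw [Finset.sum_range_succ, ← ih]
    have h3 : 3 * (n + 1) = (3 * n) + 1 + 1 + 1 := by ring
    rw [h3, Finset.sum_range_succ, Finset.sum_range_succ, Finset.sum_range_succ]
    ring


/-- The mesoscopic synaptic profile of the `m`-strip microscopic bump: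
`J_m(x, η1, η2) = κ · Σ_{j=1}^{m} ∫_{A^m_{3j}} W(x − y) dy`, where
`A^m_i = [η1 + (i−1)(η2−η1)/(3m), η1 + i(η2−η1)/(3m))`. -/
noncomputable def Jm (W : ℝ → ℝ) (κ η1 η2 : ℝ) (m : ℕ) (x : ℝ) : ℝ :=
  κ * ∑ j ∈ Finset.range m,
    ∫ y in (η1 + (3 * (j : ℝ) + 2) * (η2 - η1) / (3 * (m : ℝ)))..(
            η1 + (3 * (j : ℝ) + 3) * (η2 - η1) / (3 * (m : ℝ))), W (x - y)

/-- The limiting mesoscopic bump profile `J_b(x, η1, η2) = (κ/3) ∫_{η1}^{η2} W(x−y) dy`. -/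
noncomputable def Jb (W : ℝ → ℝ) (κ η1 η2 : ℝ) (x : ℝ) : ℝ :=
  (κ / 3) * ∫ y in η1..η2, W (x - y)

/-- `J_m(·, η1, η2)` converges to `J_b(·, η1, η2)` uniformly on `ℝ` as `m → ∞`. -/
theorem Jm_tendstoUniformly_Jb
    (L : ℝ) (hL : 0 < L) (W : ℝ → ℝ) (hWcont : Continuous W)
    (hWper : Function.Periodic W (2 * L)) (κ : ℝ) (hκ : 0 < κ)
    (η1 η2 : ℝ) (hη : η1 < η2) :
    ∀ ε > 0, ∃ M : ℕ, ∀ m ≥ M, ∀ x : ℝ,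
      |Jm W κ η1 η2 m x - Jb W κ η1 η2 x| < ε := by
  intro ε hε
  set q : ℝ := η2 - η1 with hq
  have hq0 : 0 < q := by simp [hq]; linarith
  set ε' : ℝ := ε * 9 / (4 * κ * q) with hε'
  have hε'0 : 0 < ε' := by positivity
  obtain ⟨δ, hδ0, hδ⟩ := periodic_unifcont (by linarith : (0:ℝ) < 2 * L) hWcont hWper ε' hε'0
  obtain ⟨M, hM⟩ := exists_nat_gt (2 * q / (3 * δ))
  refine ⟨M + 1, fun m hm x => ?_⟩
  have hm1 : 1 ≤ m := le_trans (Nat.le_add_left 1 M) hm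
  have hmR : (0:ℝ) < (m : ℝ) := by exact_mod_cast hm1
  have hmM : (2 * q / (3 * δ)) < (m : ℝ) := by
    refine lt_of_lt_of_le hM ?_
    exact_mod_cast le_trans (Nat.le_succ M) hm
  set th : ℝ := q / (3 * (m : ℝ)) with hth
  have hth0 : 0 < th := by positivity
  have h2th : 2 * th < δ := by
    rw [hth]
    rw [div_lt_iff₀ (by positivity : (0:ℝ) < 3 * δ)] at hmM
    rw [← mul_div_assoc, div_lt_iff₀ (by positivity : (0:ℝ) < 3 * (m:ℝ))]
    nlinarith
  set g : ℕ → ℝ := fun i => η1 + (i : ℝ) * th with hg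
  have hint : ∀ a b : ℝ, IntervalIntegrable (fun y => W (x - y)) volume a b :=
    fun a b => (hWcont.comp (by continuity)).intervalIntegrable a b
  -- Jb as a sum
  have hJb : Jb W κ η1 η2 x = (κ / 3) * ∑ i ∈ Finset.range (3 * m),
      ∫ y in g i..g (i + 1), W (x - y) := by
    rw [Jb]
    congr 1
    rw [intervalIntegral.sum_integral_adjacent_intervals (fun k _ => hint _ _)]
    have h0 : g 0 = η1 := by simp [hg]
    have h3m : g (3 * m) = η2 := by
      simp only [hg, hth]
      push_cast
      field_simp
      ring
    rw [h0, h3m]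
  rw [hJb, sum_range_three_mul]
  -- Jm as matching sum
  have hJm : Jm W κ η1 η2 m x = κ * ∑ j ∈ Finset.range m,
      ∫ y in g (3 * j + 2)..g (3 * j + 2 + 1), W (x - y) := by
    rw [Jm]
    congr 1
    refine Finset.sum_congr rfl fun j _ => ?_
    have e1 : η1 + (3 * (j : ℝ) + 2) * (η2 - η1) / (3 * (m : ℝ)) = g (3 * j + 2) := by
      simp only [hg, hth, hq]; push_cast; ring
    have e2 : η1 + (3 * (j : ℝ) + 3) * (η2 - η1) / (3 * (m : ℝ)) = g (3 * j + 2 + 1) := by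
      simp only [hg, hth, hq]; push_cast; ring
    rw [e1, e2]
  rw [hJm]
  -- rewrite difference
  set T : ℕ → ℝ := fun i => ∫ y in g i..g (i + 1), W (x - y) with hT
  have key : κ * (∑ j ∈ Finset.range m, T (3 * j + 2)) -
      (κ / 3) * ∑ j ∈ Finset.range m, (T (3 * j) + T (3 * j + 1) + T (3 * j + 2)) =
      (κ / 3) * ∑ j ∈ Finset.range m,
        ((T (3 * j + 2) - T (3 * j)) + (T (3 * j + 2) - T (3 * j + 1))) := by
    rw [Finset.mul_sum, Finset.mul_sum, Finset.mul_sum, ← Finset.sum_sub_distrib]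
    refine Finset.sum_congr rfl fun j _ => by ring
  rw [key]
  -- bound each term
  have hbd : ∀ u v : ℝ, |u - v| ≤ 2 * th → |W u - W v| ≤ ε' := by
    intro u v huv
    exact le_of_lt (hδ u v (lt_of_le_of_lt huv h2th))
  have hterm : ∀ j ∈ Finset.range m,
      |(T (3 * j + 2) - T (3 * j)) + (T (3 * j + 2) - T (3 * j + 1))| ≤ 2 * (ε' * th) := by
    intro j _
    have hgap : ∀ (k : ℕ) (t : ℝ), g k + t = g (3 * j + 2) → g (k + 1) + t = g (3 * j + 2 + 1) →
        0 < t → t ≤ 2 * th → |T (3 * j + 2) - T k| ≤ ε' * th := by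
      intro k t h1 h2 ht0 ht2
      have := shift_bound hWcont x (g k) (g (k + 1)) t ε'
        (by simp only [hg]; push_cast; nlinarith)
        (fun u v huv => hbd u v (le_trans huv (by rw [abs_of_pos ht0]; linarith)))
      rw [h1, h2] at this
      have hlen : g (k + 1) - g k = th := by simp only [hg]; push_cast; ring
      rw [hlen] at this
      exact this
    have h1 := hgap (3 * j) (2 * th) (by simp only [hg]; push_cast; ring)
      (by simp only [hg]; push_cast; ring) (by linarith) (le_refl _)
    have h2 := hgap (3 * j + 1) th (by simp only [hg]; push_cast; ring)
      (by simp only [hg]; push_cast; ring) hth0 (by linarith)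
    calc |(T (3 * j + 2) - T (3 * j)) + (T (3 * j + 2) - T (3 * j + 1))|
        ≤ |T (3 * j + 2) - T (3 * j)| + |T (3 * j + 2) - T (3 * j + 1)| := abs_add_le _ _
      _ ≤ ε' * th + ε' * th := add_le_add h1 h2
      _ = 2 * (ε' * th) := by ring
  have hsum : |∑ j ∈ Finset.range m,
      ((T (3 * j + 2) - T (3 * j)) + (T (3 * j + 2) - T (3 * j + 1)))|
      ≤ (m : ℝ) * (2 * (ε' * th)) := by
    calc _ ≤ ∑ j ∈ Finset.range m, |(T (3 * j + 2) - T (3 * j)) + (T (3 * j + 2) - T (3 * j + 1))| :=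
        Finset.abs_sum_le_sum_abs _ _
      _ ≤ ∑ _j ∈ Finset.range m, 2 * (ε' * th) := Finset.sum_le_sum hterm
      _ = (m : ℝ) * (2 * (ε' * th)) := by rw [Finset.sum_const, Finset.card_range]; ring
  have hfinal : (κ / 3) * ((m : ℝ) * (2 * (ε' * th))) = ε / 2 := by
    rw [hth, hε']
    field_simp
    ring
  calc |(κ / 3) * ∑ j ∈ Finset.range m,
        ((T (3 * j + 2) - T (3 * j)) + (T (3 * j + 2) - T (3 * j + 1)))|
      = (κ / 3) * |∑ j ∈ Finset.range m,
        ((T (3 * j + 2) - T (3 * j)) + (T (3 * j + 2) - T (3 * j + 1)))| := by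
        rw [abs_mul, abs_of_pos (by positivity : (0:ℝ) < κ / 3)]
    _ ≤ (κ / 3) * ((m : ℝ) * (2 * (ε' * th))) :=
        mul_le_mul_of_nonneg_left hsum (by positivity)
    _ = ε / 2 := hfinal
    _ < ε := by linarith
end

section
/- Let η1 < η2 < η3 < η4 be real numbers. For m ≥ 1 define K_m(x) = J_m(x, η1, η2) + J_m(x, η3, η4). Then K_m converges uniformly in x ∈ ℝ, as m → ∞, to J_b(x, η1, η2) + J_b(x, η3, η4). -/
open MeasureTheory Filter

/-- A continuous periodic function on `ℝ` is uniformly continuous. -/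
lemma periodic_uniformContinuous {f : ℝ → ℝ} {c : ℝ} (hc : 0 < c)
    (hf : Continuous f) (hp : Function.Periodic f c) : UniformContinuous f := by
  rw [Metric.uniformContinuous_iff]
  intro ε hε
  have hUC : UniformContinuousOn f (Set.Icc (-c) (2 * c)) :=
    (isCompact_Icc).uniformContinuousOn_of_continuous hf.continuousOn
  rw [Metric.uniformContinuousOn_iff] at hUC
  obtain ⟨δ, hδ0, hδ⟩ := hUC ε hε
  refine ⟨min δ c, lt_min hδ0 hc, fun {x y} hxy => ?_⟩
  set n : ℤ := ⌊x / c⌋ with hn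
  have h1 : 0 ≤ x - n * c := Int.sub_floor_div_mul_nonneg x hc
  have h2 : x - n * c < c := Int.sub_floor_div_mul_lt x hc
  have hxy' : |x - y| < c := by
    have := lt_of_lt_of_le hxy (min_le_right δ c)
    rwa [Real.dist_eq] at this
  obtain ⟨hxy1, hxy2⟩ := abs_lt.mp hxy'
  have hx' : x - n * c ∈ Set.Icc (-c) (2 * c) := ⟨by linarith, by linarith⟩
  have hy' : y - n * c ∈ Set.Icc (-c) (2 * c) := ⟨by linarith, by linarith⟩
  have hdist : dist (x - n * c) (y - n * c) < δ := by
    rw [Real.dist_eq]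
    have : x - n * c - (y - n * c) = x - y := by ring
    rw [this]
    exact lt_of_lt_of_le (by rwa [Real.dist_eq] at hxy) (min_le_left δ c)
  have := hδ _ hx' _ hy' hdist
  rwa [hp.sub_int_mul_eq n, hp.sub_int_mul_eq n] at this

/-- Uniform convergence of `Jm` to `Jb` for a single bump. -/
lemma jm_tendstoUniformly (W : ℝ → ℝ) (hW : Continuous W) (hU : UniformContinuous W)
    (κ a b : ℝ) (hab : a < b) :
    TendstoUniformly (fun m x => Jm W κ a b m x) (fun x => Jb W κ a b x) atTop := by
  rw [Metric.tendstoUniformly_iff]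
  intro ε hε
  have hden : (0:ℝ) < |κ| * (b - a) + 1 := by nlinarith [abs_nonneg κ, sub_pos.mpr hab]
  set ε' : ℝ := ε / (|κ| * (b - a) + 1) with hε'def
  have hε' : 0 < ε' := div_pos hε hden
  obtain ⟨δ, hδ0, hδ⟩ := Metric.uniformContinuous_iff.mp hU ε' hε'
  obtain ⟨N, hN⟩ := exists_nat_gt ((b - a) / δ)
  filter_upwards [eventually_ge_atTop (max N 1)] with m hm x
  have hm1 : 1 ≤ m := le_trans (le_max_right N 1) hm
  have hmN : N ≤ m := le_trans (le_max_left N 1) hm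
  have hm0 : (0:ℝ) < (m:ℝ) := by exact_mod_cast Nat.lt_of_lt_of_le Nat.zero_lt_one hm1
  have hmne : (m:ℝ) ≠ 0 := ne_of_gt hm0
  set h : ℝ := (b - a) / m with hhdef
  have hh0 : 0 < h := div_pos (by linarith) hm0
  have hhδ : h < δ := by
    rw [hhdef, div_lt_iff₀ hm0]
    have hNm : (N:ℝ) ≤ (m:ℝ) := by exact_mod_cast hmN
    have : (b - a) / δ < (m:ℝ) := lt_of_lt_of_le hN hNm
    calc b - a = (b - a) / δ * δ := by field_simp
    _ < (m:ℝ) * δ := by exact mul_lt_mul_of_pos_right this hδ0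
    _ = δ * m := by ring
  -- integrability of the integrand
  have hWint : ∀ u v : ℝ, IntervalIntegrable (fun y => W (x - y)) volume u v := by
    intro u v
    exact (hW.comp (continuous_const.sub continuous_id)).intervalIntegrable u v
  -- split the full integral into m adjacent pieces
  have hsplit : (∫ y in a..b, W (x - y))
      = ∑ j ∈ Finset.range m, ∫ y in (a + j * h)..(a + (j + 1) * h), W (x - y) := by
    have hs := intervalIntegral.sum_integral_adjacent_intervals
      (f := fun y => W (x - y)) (μ := volume) (a := fun k : ℕ => a + k * h) (n := m)
      (fun k _ => hWint _ _)
    simp only [Nat.cast_add, Nat.cast_one, Nat.cast_zero] at hs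
    have e0 : a + (0:ℝ) * h = a := by ring
    have em : a + (m:ℝ) * h = b := by rw [hhdef]; field_simp; ring
    rw [e0, em] at hs
    exact hs.symm
  -- rewrite Jb as a sum
  have hJb : Jb W κ a b x
      = κ * ∑ j ∈ Finset.range m, (1/3) * ∫ y in (a + j * h)..(a + (j + 1) * h), W (x - y) := by
    rw [Jb, hsplit, Finset.mul_sum, Finset.mul_sum]
    exact Finset.sum_congr rfl fun j _ => by ring
  -- rewrite Jm with endpoints in terms of h
  have hJm : Jm W κ a b m x
      = κ * ∑ j ∈ Finset.range m,
          ∫ y in (a + j * h + 2 * (h / 3))..(a + (j + 1) * h), W (x - y) := by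
    rw [Jm]
    congr 1
    refine Finset.sum_congr rfl fun j _ => ?_
    have e1 : a + (3 * (j:ℝ) + 2) * (b - a) / (3 * (m:ℝ)) = a + j * h + 2 * (h / 3) := by
      rw [hhdef]; field_simp; ring
    have e2 : a + (3 * (j:ℝ) + 3) * (b - a) / (3 * (m:ℝ)) = a + ((j:ℝ) + 1) * h := by
      rw [hhdef]; field_simp
    rw [e1, e2]
  -- per-term bound
  have hterm : ∀ j ∈ Finset.range m,
      |(1/3) * (∫ y in (a + j * h)..(a + (j + 1) * h), W (x - y))
        - ∫ y in (a + j * h + 2 * (h / 3))..(a + (j + 1) * h), W (x - y)| ≤ ε' * (h / 3) := by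
    intro j _
    set u : ℝ := a + j * h with hu
    set P : ℝ := u + 2 * (h / 3) with hP
    set Q : ℝ := u + h with hQ
    have hPQ : P < Q := by rw [hP, hQ]; linarith
    have huQ : a + ((j:ℝ) + 1) * h = Q := by rw [hQ, hu]; ring
    have hcv : (∫ s in P..Q, W (x - (3 * s - 2 * Q)))
        = (3:ℝ)⁻¹ • ∫ y in u..Q, W (x - y) := by
      have hthis := intervalIntegral.integral_comp_mul_sub (a := P) (b := Q)
        (fun y => W (x - y)) (c := (3:ℝ)) (by norm_num) (2 * Q)
      rw [show 3 * P - 2 * Q = u by rw [hP, hQ, hu]; ring,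
        show 3 * Q - 2 * Q = Q by ring] at hthis
      exact hthis
    rw [huQ]
    have hsub : (1/3) * (∫ y in u..Q, W (x - y))
        - (∫ y in P..Q, W (x - y))
        = ∫ s in P..Q, (W (x - (3 * s - 2 * Q)) - W (x - s)) := by
      rw [intervalIntegral.integral_sub]
      · rw [hcv, smul_eq_mul]; ring
      · exact ((hW.comp ((continuous_const.sub
          ((continuous_const.mul continuous_id).sub continuous_const))) ).intervalIntegrable P Q)
      · exact hWint P Q
    rw [hsub]
    have hbound : ∀ s ∈ Set.uIoc P Q, ‖W (x - (3 * s - 2 * Q)) - W (x - s)‖ ≤ ε' := by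
      intro s hs
      rw [Set.uIoc_of_le hPQ.le] at hs
      have hs1 : P < s := hs.1
      have hs2 : s ≤ Q := hs.2
      have hd : dist (x - (3 * s - 2 * Q)) (x - s) < δ := by
        rw [Real.dist_eq]
        have : x - (3 * s - 2 * Q) - (x - s) = 2 * (Q - s) := by ring
        rw [this, abs_of_nonneg (by linarith)]
        have : Q - s < h / 3 := by rw [hQ] at *; rw [hP] at hs1; linarith
        linarith
      have := hδ hd
      rw [Real.dist_eq] at this
      exact le_of_lt this
    have := intervalIntegral.norm_integral_le_of_norm_le_const hbound
    rw [Real.norm_eq_abs] at this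
    have hQP : |Q - P| = h / 3 := by
      rw [abs_of_nonneg (by linarith), hP, hQ]; ring
    rw [hQP] at this
    exact this
  -- combine
  rw [Real.dist_eq, hJb, hJm, ← mul_sub, ← Finset.sum_sub_distrib, abs_mul]
  have hsum : |∑ j ∈ Finset.range m,
      ((1/3) * (∫ y in (a + j * h)..(a + (j + 1) * h), W (x - y))
        - ∫ y in (a + j * h + 2 * (h / 3))..(a + (j + 1) * h), W (x - y))|
      ≤ (m:ℝ) * (ε' * (h / 3)) := by
    calc _ ≤ ∑ j ∈ Finset.range m,
        |(1/3) * (∫ y in (a + j * h)..(a + (j + 1) * h), W (x - y))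
          - ∫ y in (a + j * h + 2 * (h / 3))..(a + (j + 1) * h), W (x - y)| :=
        Finset.abs_sum_le_sum_abs _ _
    _ ≤ ∑ _j ∈ Finset.range m, ε' * (h / 3) := Finset.sum_le_sum hterm
    _ = (m:ℝ) * (ε' * (h / 3)) := by rw [Finset.sum_const, Finset.card_range, nsmul_eq_mul]
  have hmh : (m:ℝ) * h = b - a := by rw [hhdef]; field_simp
  have hεeq : ε' * (|κ| * (b - a) + 1) = ε := by
    rw [hε'def]; field_simp
  calc |κ| * |∑ j ∈ Finset.range m,
      ((1/3) * (∫ y in (a + j * h)..(a + (j + 1) * h), W (x - y))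
        - ∫ y in (a + j * h + 2 * (h / 3))..(a + (j + 1) * h), W (x - y))|
      ≤ |κ| * ((m:ℝ) * (ε' * (h / 3))) := by
        exact mul_le_mul_of_nonneg_left hsum (abs_nonneg κ)
    _ = |κ| * (b - a) * ε' / 3 := by
        rw [show (m:ℝ) * (ε' * (h/3)) = ((m:ℝ) * h) * ε' / 3 by ring, hmh]; ring
    _ < ε := by nlinarith [abs_nonneg κ, hε'.le, mul_pos hε' (sub_pos.mpr hab)]

/-- For the two-bump configuration, `K_m = J_m(·,η1,η2) + J_m(·,η3,η4)` converges
uniformly in `x ∈ ℝ`, as `m → ∞`, to `J_b(·,η1,η2) + J_b(·,η3,η4)`. -/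
theorem twoBump_tendstoUniformly
    (L : ℝ) (hL : 0 < L) (W : ℝ → ℝ) (hWcont : Continuous W)
    (hWper : Function.Periodic W (2 * L)) (κ : ℝ) (hκ : 0 < κ)
    (η1 η2 η3 η4 : ℝ) (h12 : η1 < η2) (h23 : η2 < η3) (h34 : η3 < η4) :
    TendstoUniformly
      (fun m x => Jm W κ η1 η2 m x + Jm W κ η3 η4 m x)
      (fun x => Jb W κ η1 η2 x + Jb W κ η3 η4 x) atTop := by
  have hU : UniformContinuous W := periodic_uniformContinuous (by linarith) hWcont hWper
  have h1 := jm_tendstoUniformly W hWcont hU κ η1 η2 h12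
  have h2 := jm_tendstoUniformly W hWcont hU κ η3 η4 h34
  rw [Metric.tendstoUniformly_iff] at h1 h2 ⊢
  intro ε hε
  filter_upwards [h1 (ε/2) (by linarith), h2 (ε/2) (by linarith)] with m H1 H2 x
  calc dist (Jb W κ η1 η2 x + Jb W κ η3 η4 x) (Jm W κ η1 η2 m x + Jm W κ η3 η4 m x)
      ≤ dist (Jb W κ η1 η2 x) (Jm W κ η1 η2 m x)
        + dist (Jb W κ η3 η4 x) (Jm W κ η3 η4 m x) := dist_add_add_le _ _ _ _
    _ < ε/2 + ε/2 := add_lt_add (H1 x) (H2 x)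
    _ = ε := by ring
end
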